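/- Let M be an MRTA instance whose cost function c is injective on E, let (W, a) be the output of the SSI auction on M, and let G' be the complete graph on R ∪ T with edge costs c'(x,y) = 0 if both x,y ∈ R and c'(x,y) = c(x,y) otherwise. Then for every spanning tree F' of the complete graph on R, the edge set F' ∪ {w_1,…,w_{|T|}} is a spanning tree of G' of minimum total c'-cost; in particular, Σ_{k=1}^{|T|} c(w_k) equals the minimum weight of a spanning tree of G'. -/

import Mathlib

open Finset
open scoped Classical

/-- The set of tasks assigned in the bid rounds with (0-based) index `< k`. -/
def auctionAssigned {V : Type*} [DecidableEq V] {n : ℕ} (w : Fin n → V × V) (k : ℕ) :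
    Finset V :=
  (Finset.univ.filter fun i : Fin n => (i : ℕ) < k).image fun i => (w i).2

/-- `w` is the output of the SSI auction for the instance `(R, T, c)`. -/
def IsAuction {V : Type*} [DecidableEq V] (R T : Finset V) (c : V → V → ℝ) {n : ℕ}
    (w : Fin n → V × V) : Prop :=
  ∀ k : Fin n,
    (w k).1 ∈ R ∪ auctionAssigned w (k : ℕ) ∧
    (w k).2 ∈ T \ auctionAssigned w (k : ℕ) ∧
    ∀ s ∈ R ∪ auctionAssigned w (k : ℕ), ∀ t ∈ T \ auctionAssigned w (k : ℕ),
      (s, t) ≠ w k → c (w k).1 (w k).2 < c s t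

/-- `c` is injective on the edge set of the complete graph. -/
def InjOnEdges {V : Type*} (c : V → V → ℝ) : Prop :=
  ∀ x y x' y' : V, x ≠ y → x' ≠ y' → c x y = c x' y' →
    (x = x' ∧ y = y') ∨ (x = y' ∧ y = x')

/-- The graph whose edges are the winning edges of the auction. -/
def auctionGraph {V : Type*} {n : ℕ} (w : Fin n → V × V) : SimpleGraph V :=
  SimpleGraph.fromRel fun x y => ∃ k, w k = (x, y)

/-- The total cost of the edges of a graph `H` with respect to a symmetric cost
function `c` (each unordered edge counted once). -/
noncomputable def gWeight {V : Type*} [Fintype V] (c : V → V → ℝ) (H : SimpleGraph V) : ℝ :=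
  (∑ x : V, ∑ y : V, if H.Adj x y then c x y else 0) / 2

section Aux

open SimpleGraph

variable {V : Type*}

lemma gWeight_congr [Fintype V] {c1 c2 : V → V → ℝ} {G H : SimpleGraph V}
    (h : ∀ a b, (if G.Adj a b then c1 a b else 0) = (if H.Adj a b then c2 a b else 0)) :
    gWeight c1 G = gWeight c2 H := by
  unfold gWeight
  congr 1
  exact Finset.sum_congr rfl fun a _ => Finset.sum_congr rfl fun b _ => h a b

lemma gWeight_mono [Fintype V] {c' : V → V → ℝ} (h0 : ∀ a b, 0 ≤ c' a b)
    {G H : SimpleGraph V} (hle : G ≤ H) : gWeight c' G ≤ gWeight c' H := by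
  unfold gWeight
  have : ∀ x y : V, (if G.Adj x y then c' x y else 0) ≤ (if H.Adj x y then c' x y else 0) := by
    intro x y
    by_cases h : G.Adj x y
    · rw [if_pos h, if_pos (hle h)]
    · rw [if_neg h]
      by_cases h' : H.Adj x y
      · rw [if_pos h']; exact h0 x y
      · rw [if_neg h']
  have hsum : (∑ x : V, ∑ y : V, if G.Adj x y then c' x y else 0) ≤
      (∑ x : V, ∑ y : V, if H.Adj x y then c' x y else 0) :=
    Finset.sum_le_sum fun x _ => Finset.sum_le_sum fun y _ => this x y
  linarith

lemma pair_sum_eq [Fintype V] (p q : V) (t : ℝ) :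
    (∑ a : V, ∑ b : V, if a = p ∧ b = q then t else 0) = t := by
  have h1 : ∀ a : V, (∑ b : V, if a = p ∧ b = q then t else 0) = if a = p then t else 0 := by
    intro a
    by_cases h : a = p <;> simp [h]
  simp [h1]

lemma gWeight_add_edge [Fintype V] (c' : V → V → ℝ) (hs : ∀ a b, c' a b = c' b a)
    {G G' : SimpleGraph V} {u v : V} (hne : u ≠ v) (hG : ¬G.Adj u v) (hG' : G'.Adj u v)
    (hdiff : ∀ a b, ¬(a = u ∧ b = v) → ¬(a = v ∧ b = u) → (G'.Adj a b ↔ G.Adj a b)) :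
    gWeight c' G' = gWeight c' G + c' u v := by
  have hGvu : ¬G.Adj v u := fun h => hG h.symm
  have key : ∀ a b : V, (if G'.Adj a b then c' a b else 0) =
      (if G.Adj a b then c' a b else 0) +
      ((if a = u ∧ b = v then c' u v else 0) + (if a = v ∧ b = u then c' u v else 0)) := by
    intro a b
    by_cases h1 : a = u ∧ b = v
    · obtain ⟨rfl, rfl⟩ := h1
      simp [hG', hG, hne]
    · by_cases h2 : a = v ∧ b = u
      · obtain ⟨rfl, rfl⟩ := h2
        simp [hG'.symm, hGvu, hne, hne.symm, hs a b]
      · rw [hdiff a b h1 h2]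
        simp [h1, h2]
  unfold gWeight
  simp only [key]
  rw [Finset.sum_congr rfl (fun a _ => Finset.sum_add_distrib), Finset.sum_add_distrib,
    Finset.sum_congr rfl (fun a _ => Finset.sum_add_distrib), Finset.sum_add_distrib,
    pair_sum_eq, pair_sum_eq]
  ring

/-- Adding an edge to an isolated vertex of an acyclic graph keeps it acyclic. -/
lemma sup_edge_acyclic (G : SimpleGraph V) (hG : G.IsAcyclic) {u v : V} (hne : u ≠ v)
    (hv : ∀ z, ¬G.Adj v z) : (G ⊔ edge u v).IsAcyclic := by
  have hadj' : ∀ z, (G ⊔ edge u v).Adj v z → z = u := by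
    intro z h
    rcases (sup_adj _ _ _ _).mp h with h | h
    · exact absurd h (hv z)
    · rcases (edge_adj u v v z).mp h with ⟨⟨h1, h2⟩ | ⟨h1, h2⟩, _⟩
      · exact absurd h1.symm hne
      · exact h2
  have hvu : ∀ q : (G ⊔ edge u v).Walk v u, s(u, v) ∈ q.edges := by
    intro q
    cases q with
    | nil => exact absurd rfl hne.symm
    | cons h q' =>
      have := hadj' _ h
      subst this
      rw [Sym2.eq_swap]
      exact List.mem_cons_self
  have hbr : (G ⊔ edge u v).IsBridge s(u, v) := by
    rw [isBridge_iff_adj_and_forall_walk_mem_edges]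
    intro p
    have := hvu p.reverse
    rwa [SimpleGraph.Walk.edges_reverse, List.mem_reverse] at this
  intro a cyc hcyc
  have hnot := hbr.notMem_edges_of_isCycle hcyc
  have hsub : ∀ e ∈ cyc.edges, e ∈ G.edgeSet := by
    intro e he
    have h1 := cyc.edges_subset_edgeSet he
    rw [edgeSet_sup] at h1
    rcases h1 with h1 | h1
    · exact h1
    · rw [edge_edgeSet_of_ne hne] at h1
      exact absurd (h1 ▸ he) hnot
  exact hG (cyc.transfer G hsub) (hcyc.transfer hsub)

lemma reach_tri {K : SimpleGraph V} {x y a b : V} (p : K.Walk a b) :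
    (K.deleteEdges {s(x, y)}).Reachable a b ∨
      ((K.deleteEdges {s(x, y)}).Reachable a x ∧ (K.deleteEdges {s(x, y)}).Reachable y b) ∨
      ((K.deleteEdges {s(x, y)}).Reachable a y ∧ (K.deleteEdges {s(x, y)}).Reachable x b) := by
  induction p with
  | nil => exact Or.inl (Reachable.refl _)
  | @cons a a' b h q ih =>
    by_cases he : s(a, a') = s(x, y)
    · rcases Sym2.eq_iff.mp he with ⟨rfl, rfl⟩ | ⟨rfl, rfl⟩
      · rcases ih with h1 | ⟨h2, h3⟩ | ⟨h4, h5⟩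
        · exact Or.inr (Or.inl ⟨Reachable.refl _, h1⟩)
        · exact Or.inl (h2.symm.trans h3)
        · exact Or.inl h5
      · rcases ih with h1 | ⟨h2, h3⟩ | ⟨h4, h5⟩
        · exact Or.inr (Or.inr ⟨Reachable.refl _, h1⟩)
        · exact Or.inl h3
        · exact Or.inl (h4.symm.trans h5)
    · have h' : (K.deleteEdges {s(x, y)}).Adj a a' :=
        deleteEdges_adj.mpr ⟨h, by simpa using he⟩
      rcases ih with h1 | ⟨h2, h3⟩ | ⟨h4, h5⟩
      · exact Or.inl (h'.reachable.trans h1)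
      · exact Or.inr (Or.inl ⟨h'.reachable.trans h2, h3⟩)
      · exact Or.inr (Or.inr ⟨h'.reachable.trans h4, h5⟩)

end Aux

section Aux2

open SimpleGraph

variable {V : Type*}

lemma tree_exchange {K : SimpleGraph V} (hK : K.IsTree) {u v : V} (hne : u ≠ v)
    (hnadj : ¬K.Adj u v) (S : Set V) (hu : u ∈ S) (hv : v ∉ S) :
    ∃ x y : V, x ∈ S ∧ y ∉ S ∧ K.Adj x y ∧
      (K.deleteEdges {s(x, y)} ⊔ edge u v).IsTree := by
  obtain ⟨p, hp, hpu⟩ := hK.existsUnique_path u v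
  obtain ⟨d, hd, hdx, hdy⟩ := p.exists_boundary_dart S hu hv
  set x := d.fst with hxdef
  set y := d.snd with hydef
  have hxy : K.Adj x y := d.adj
  have hedge : s(x, y) ∈ p.edges := List.mem_map_of_mem (f := Dart.edge) hd
  set K'' := K.deleteEdges {s(x, y)} with hK''def
  have hK''le : K'' ≤ K := deleteEdges_le _
  -- u and v are not reachable in K''
  have hnr : ¬K''.Reachable u v := by
    intro hr
    obtain ⟨q⟩ := hr
    set q' := q.toPath with hq'def
    have hsub : ∀ e ∈ (q'.val).edges, e ∈ K.edgeSet := fun e he =>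
      edgeSet_mono hK''le ((q'.val).edges_subset_edgeSet he)
    have heq : (q'.val).transfer K hsub = p := hpu _ (q'.prop.transfer hsub)
    have h1 : s(x, y) ∈ (q'.val).edges := by
      rw [← Walk.edges_transfer q'.val hsub, heq]; exact hedge
    have h2 := (q'.val).edges_subset_edgeSet h1
    rw [hK''def, edgeSet_deleteEdges] at h2
    exact h2.2 rfl
  have hreach : ∀ a : V, K''.Reachable a x ∨ K''.Reachable a y := by
    intro a
    rcases reach_tri (x := x) (y := y) (hK.isConnected.preconnected a x).some with
      h | ⟨h, -⟩ | ⟨h, -⟩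
    exacts [Or.inl h, Or.inl h, Or.inr h]
  have hxyK'' : ¬K''.Reachable x y := by
    have hbr := (isAcyclic_iff_forall_adj_isBridge.mp hK.IsAcyclic) hxy
    exact isBridge_iff.mp hbr
  -- the new graph
  set K' := K'' ⊔ edge u v with hK'def
  have hadjuv : K'.Adj u v :=
    (sup_adj _ _ _ _).mpr (Or.inr ((edge_adj u v u v).mpr ⟨Or.inl ⟨rfl, rfl⟩, hne⟩))
  have hxy' : K'.Reachable x y := by
    rcases hreach u with hux | huy <;> rcases hreach v with hvx | hvy
    · exact absurd (hux.trans hvx.symm) hnr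
    · exact ((hux.mono le_sup_left).symm.trans hadjuv.reachable).trans (hvy.mono le_sup_left)
    · exact ((huy.mono le_sup_left).symm.trans hadjuv.reachable).trans
        (hvx.mono le_sup_left) |>.symm
    · exact absurd (huy.trans hvy.symm) hnr
  have hconn : K'.Connected := by
    have hnev : Nonempty V := ⟨u⟩
    rw [connected_iff]
    refine ⟨?_, hnev⟩
    intro a b
    have ha := hreach a
    have hb := hreach b
    rcases ha with ha | ha <;> rcases hb with hb | hb
    · exact (ha.mono le_sup_left).trans (hb.mono le_sup_left).symm
    · exact ((ha.mono le_sup_left).trans hxy').trans (hb.mono le_sup_left).symm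
    · exact ((ha.mono le_sup_left).trans hxy'.symm).trans (hb.mono le_sup_left).symm
    · exact (ha.mono le_sup_left).trans (hb.mono le_sup_left).symm
  have hbr' : K'.IsBridge s(u, v) := by
    rw [isBridge_iff_adj_and_forall_walk_mem_edges]
    intro q
    by_contra hq
    have hsub : ∀ e ∈ q.edges, e ∈ K''.edgeSet := by
      intro e he
      have h1 := q.edges_subset_edgeSet he
      rw [hK'def, edgeSet_sup] at h1
      rcases h1 with h1 | h1
      · exact h1
      · rw [edge_edgeSet_of_ne hne] at h1
        exact absurd (h1 ▸ he) hq
    exact hnr ⟨q.transfer K'' hsub⟩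
  have hacyc : K'.IsAcyclic := by
    intro a cyc hcyc
    have hnot := hbr'.notMem_edges_of_isCycle hcyc
    have hsub : ∀ e ∈ cyc.edges, e ∈ K.edgeSet := by
      intro e he
      have h1 := cyc.edges_subset_edgeSet he
      rw [hK'def, edgeSet_sup] at h1
      rcases h1 with h1 | h1
      · exact edgeSet_mono hK''le h1
      · rw [edge_edgeSet_of_ne hne] at h1
        exact absurd (h1 ▸ he) hnot
    exact hK.IsAcyclic (cyc.transfer K hsub) (hcyc.transfer hsub)
  exact ⟨x, y, hdx, hdy, hxy, ⟨hconn, hacyc⟩⟩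

end Aux2

section Auction

open SimpleGraph

variable {V : Type*} [DecidableEq V] {R T : Finset V} {c : V → V → ℝ} {n : ℕ}
  {w : Fin n → V × V}

lemma mem_auctionAssigned {v : V} {k : ℕ} :
    v ∈ auctionAssigned w k ↔ ∃ i : Fin n, (i : ℕ) < k ∧ (w i).2 = v := by
  simp [auctionAssigned]

lemma snd_mem_T (hw : IsAuction R T c w) (k : Fin n) : (w k).2 ∈ T :=
  (Finset.mem_sdiff.mp (hw k).2.1).1

lemma snd_not_assigned (hw : IsAuction R T c w) (k : Fin n) :
    (w k).2 ∉ auctionAssigned w (k : ℕ) :=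
  (Finset.mem_sdiff.mp (hw k).2.1).2

lemma snd_inj (hw : IsAuction R T c w) {i j : Fin n} (h : (w i).2 = (w j).2) : i = j := by
  rcases lt_trichotomy i j with hij | hij | hij
  · exact absurd (mem_auctionAssigned.mpr ⟨i, hij, h⟩) (snd_not_assigned hw j)
  · exact hij
  · exact absurd (mem_auctionAssigned.mpr ⟨j, hij, h.symm⟩) (snd_not_assigned hw i)

lemma snd_not_R (hdisj : Disjoint R T) (hw : IsAuction R T c w) (k : Fin n) : (w k).2 ∉ R :=
  fun h => (Finset.disjoint_left.mp hdisj) h (snd_mem_T hw k)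

lemma fst_ne_snd (hdisj : Disjoint R T) (hw : IsAuction R T c w) (k : Fin n) :
    (w k).1 ≠ (w k).2 := by
  intro h
  rcases Finset.mem_union.mp (hw k).1 with h1 | h1
  · exact snd_not_R hdisj hw k (h ▸ h1)
  · exact snd_not_assigned hw k (h ▸ h1)

lemma fst_eq_snd_lt (hdisj : Disjoint R T) (hw : IsAuction R T c w) {j k : Fin n}
    (h : (w j).1 = (w k).2) : (k : ℕ) < (j : ℕ) := by
  rcases Finset.mem_union.mp (hw j).1 with h1 | h1
  · exact absurd (h ▸ h1) (snd_not_R hdisj hw k)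
  · obtain ⟨i, hij, hi⟩ := mem_auctionAssigned.mp h1
    have hik : i = k := snd_inj hw (hi.trans h)
    subst hik
    exact hij

lemma auctionGraph_adj {x y : V} :
    (auctionGraph w).Adj x y ↔ x ≠ y ∧ ∃ k, w k = (x, y) ∨ w k = (y, x) := by
  simp only [auctionGraph, fromRel_adj, exists_or]

lemma auctionGraph_adj_winner (hdisj : Disjoint R T) (hw : IsAuction R T c w) (k : Fin n) :
    (auctionGraph w).Adj (w k).1 (w k).2 :=
  auctionGraph_adj.mpr ⟨fst_ne_snd hdisj hw k, k, Or.inl rfl⟩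

lemma assigned_full (hw : IsAuction R T c w) (hn : n = T.card) :
    auctionAssigned w n = T := by
  apply Finset.eq_of_subset_of_card_le
  · intro v hv
    obtain ⟨i, -, rfl⟩ := mem_auctionAssigned.mp hv
    exact snd_mem_T hw i
  · have h1 : auctionAssigned w n = Finset.univ.image (fun i : Fin n => (w i).2) := by
      unfold auctionAssigned
      congr 1
      ext i
      simp [i.isLt]
    rw [h1, Finset.card_image_of_injOn (fun i _ j _ h => snd_inj hw h)]
    simp [hn]

lemma R_nonempty [Fintype V] (hw : IsAuction R T c w) (hunion : R ∪ T = Finset.univ)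
    (hn : n = T.card) (hcard : 3 ≤ Fintype.card V) : R.Nonempty := by
  rcases R.eq_empty_or_nonempty with hR | hR
  · exfalso
    have hT : T = Finset.univ := by rw [← hunion, hR, Finset.empty_union]
    have hn3 : 3 ≤ n := by rw [hn, hT]; simpa using hcard
    have h0 := (hw ⟨0, by omega⟩).1
    rw [hR] at h0
    rcases Finset.mem_union.mp h0 with h | h
    · simp at h
    · obtain ⟨i, hi, -⟩ := mem_auctionAssigned.mp h
      exact (Nat.not_lt_zero _ hi).elim
  · exact hR

lemma M_connected [Fintype V] (hdisj : Disjoint R T) (hunion : R ∪ T = Finset.univ)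
    (hn : n = T.card) (hcard : 3 ≤ Fintype.card V) (hw : IsAuction R T c w)
    (F' : SimpleGraph V) (hF'conn : ∀ x ∈ R, ∀ y ∈ R, F'.Reachable x y) :
    (F' ⊔ auctionGraph w).Connected := by
  obtain ⟨r₀, hr₀⟩ := R_nonempty hw hunion hn hcard
  have key : ∀ k : ℕ, ∀ v ∈ R ∪ auctionAssigned w k,
      (F' ⊔ auctionGraph w).Reachable v r₀ := by
    intro k
    induction k using Nat.strong_induction_on with
    | _ k ih =>
      intro v hv
      rcases Finset.mem_union.mp hv with hvR | hvA
      · exact (hF'conn v hvR r₀ hr₀).mono le_sup_left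
      · obtain ⟨i, hik, rfl⟩ := mem_auctionAssigned.mp hvA
        have h1 := ih (i : ℕ) hik (w i).1 (hw i).1
        have hadj : (F' ⊔ auctionGraph w).Adj (w i).1 (w i).2 :=
          (sup_adj _ _ _ _).mpr (Or.inr (auctionGraph_adj_winner hdisj hw i))
        exact hadj.symm.reachable.trans h1
  rw [connected_iff]
  refine ⟨fun a b => ?_, Fintype.card_pos_iff.mp (by omega)⟩
  have hmem : ∀ z : V, z ∈ R ∪ auctionAssigned w n := by
    intro z
    rw [assigned_full hw hn, hunion]
    exact Finset.mem_univ z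
  exact (key n a (hmem a)).trans (key n b (hmem b)).symm

lemma M_acyclic (hdisj : Disjoint R T) (hw : IsAuction R T c w)
    (F' : SimpleGraph V) (hF'R : ∀ x y : V, F'.Adj x y → x ∈ R ∧ y ∈ R)
    (hF'acyc : F'.IsAcyclic) : (F' ⊔ auctionGraph w).IsAcyclic := by
  have main : ∀ k : ℕ,
      (F' ⊔ SimpleGraph.fromRel (fun x y => ∃ i : Fin n, (i : ℕ) < k ∧ w i = (x, y))).IsAcyclic := by
    intro k
    induction k with
    | zero =>
      have hbot : SimpleGraph.fromRel (fun x y => ∃ i : Fin n, (i : ℕ) < 0 ∧ w i = (x, y)) =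
          (⊥ : SimpleGraph V) := by
        ext a b
        simp [fromRel_adj]
      rw [hbot, sup_bot_eq]
      exact hF'acyc
    | succ k ih =>
      by_cases hk : k < n
      · have hsplit : ∀ a b : V, (∃ i : Fin n, (i : ℕ) < k + 1 ∧ w i = (a, b)) ↔
            (∃ i : Fin n, (i : ℕ) < k ∧ w i = (a, b)) ∨
              (a = (w ⟨k, hk⟩).1 ∧ b = (w ⟨k, hk⟩).2) := by
          intro a b
          constructor
          · rintro ⟨i, hik, hi⟩
            rcases Nat.lt_succ_iff_lt_or_eq.mp hik with h' | h'
            · exact Or.inl ⟨i, h', hi⟩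
            · have hij : i = ⟨k, hk⟩ := Fin.ext h'
              subst hij
              exact Or.inr ⟨by rw [hi], by rw [hi]⟩
          · rintro (⟨i, hik, hi⟩ | ⟨ha, hb⟩)
            · exact ⟨i, Nat.lt_succ_of_lt hik, hi⟩
            · exact ⟨⟨k, hk⟩, Nat.lt_succ_self k, by rw [ha, hb]⟩
        have hdecomp : SimpleGraph.fromRel (fun x y => ∃ i : Fin n, (i : ℕ) < k + 1 ∧ w i = (x, y)) =
            SimpleGraph.fromRel (fun x y => ∃ i : Fin n, (i : ℕ) < k ∧ w i = (x, y)) ⊔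
              edge (w ⟨k, hk⟩).1 (w ⟨k, hk⟩).2 := by
          ext a b
          simp only [fromRel_adj, sup_adj, edge_adj]
          constructor
          · rintro ⟨hne, h | h⟩
            · rcases (hsplit a b).mp h with h' | ⟨h1, h2⟩
              · exact Or.inl ⟨hne, Or.inl h'⟩
              · exact Or.inr ⟨Or.inl ⟨h1, h2⟩, hne⟩
            · rcases (hsplit b a).mp h with h' | ⟨h1, h2⟩
              · exact Or.inl ⟨hne, Or.inr h'⟩
              · exact Or.inr ⟨Or.inr ⟨h2, h1⟩, hne⟩
          · rintro (⟨hne, h | h⟩ | ⟨h | h, hne⟩)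
            · exact ⟨hne, Or.inl ((hsplit a b).mpr (Or.inl h))⟩
            · exact ⟨hne, Or.inr ((hsplit b a).mpr (Or.inl h))⟩
            · exact ⟨hne, Or.inl ((hsplit a b).mpr (Or.inr h))⟩
            · exact ⟨hne, Or.inr ((hsplit b a).mpr (Or.inr ⟨h.2, h.1⟩))⟩
        have hiso : ∀ z, ¬(F' ⊔ SimpleGraph.fromRel
            (fun x y => ∃ i : Fin n, (i : ℕ) < k ∧ w i = (x, y))).Adj (w ⟨k, hk⟩).2 z := by
          intro z h
          rcases (sup_adj _ _ _ _).mp h with h | h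
          · exact snd_not_R hdisj hw ⟨k, hk⟩ (hF'R _ _ h).1
          · rw [fromRel_adj] at h
            obtain ⟨hne, h | h⟩ := h <;> obtain ⟨i, hik, hi⟩ := h
            · have h1 : (w i).1 = (w ⟨k, hk⟩).2 := by rw [hi]
              have := fst_eq_snd_lt hdisj hw h1
              simp only [Fin.val_mk] at this
              omega
            · have h2 : (w i).2 = (w ⟨k, hk⟩).2 := by rw [hi]
              have := snd_inj hw h2
              have : (i : ℕ) = k := by rw [this]
              omega
        rw [hdecomp, ← sup_assoc]
        exact sup_edge_acyclic _ ih (fst_ne_snd hdisj hw ⟨k, hk⟩) hiso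
      · have heq : (fun x y : V => ∃ i : Fin n, (i : ℕ) < k + 1 ∧ w i = (x, y)) =
            (fun x y : V => ∃ i : Fin n, (i : ℕ) < k ∧ w i = (x, y)) := by
          funext x y
          apply propext
          constructor <;> rintro ⟨i, hi, h⟩ <;> exact ⟨i, by have := i.isLt; omega, h⟩
        rw [heq]
        exact ih
  have hfin : auctionGraph w =
      SimpleGraph.fromRel (fun x y => ∃ i : Fin n, (i : ℕ) < n ∧ w i = (x, y)) := by
    unfold auctionGraph
    congr 1
    funext x y
    apply propext
    constructor
    · rintro ⟨i, h⟩; exact ⟨i, i.isLt, h⟩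
    · rintro ⟨i, -, h⟩; exact ⟨i, h⟩
  rw [hfin]
  exact main n

lemma gWeight_auction [Fintype V] (hdisj : Disjoint R T) (hw : IsAuction R T c w)
    (hsymm : ∀ x y, c x y = c y x) :
    gWeight c (auctionGraph w) = ∑ k : Fin n, c (w k).1 (w k).2 := by
  have hadj := fun k => auctionGraph_adj_winner hdisj hw k
  set P1 : Finset (V × V) := Finset.univ.image w with hP1
  set P2 : Finset (V × V) := Finset.univ.image (fun k => ((w k).2, (w k).1)) with hP2
  have hzero : ∀ p ∈ (Finset.univ : Finset (V × V)), p ∉ P1 ∪ P2 →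
      (if (auctionGraph w).Adj p.1 p.2 then c p.1 p.2 else 0) = 0 := by
    intro p _ hp
    rw [if_neg]
    intro h
    rcases (auctionGraph_adj.mp h).2 with ⟨k, hk | hk⟩
    · exact hp (Finset.mem_union_left _ (Finset.mem_image.mpr ⟨k, Finset.mem_univ _, by rw [hk]⟩))
    · exact hp (Finset.mem_union_right _ (Finset.mem_image.mpr ⟨k, Finset.mem_univ _, by rw [hk]⟩))
  have hdisjP : Disjoint P1 P2 := by
    rw [Finset.disjoint_left]
    rintro p hp1 hp2
    obtain ⟨j, -, hj⟩ := Finset.mem_image.mp hp1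
    obtain ⟨k, -, hk⟩ := Finset.mem_image.mp hp2
    have heq : w j = ((w k).2, (w k).1) := hj.trans hk.symm
    have h1 : (w j).1 = (w k).2 := by rw [heq]
    have h2 : (w k).1 = (w j).2 := by rw [heq]
    have hlt1 := fst_eq_snd_lt hdisj hw h1
    have hlt2 := fst_eq_snd_lt hdisj hw h2
    omega
  have hinj1 : ∀ i ∈ (Finset.univ : Finset (Fin n)), ∀ j ∈ Finset.univ, w i = w j → i = j :=
    fun i _ j _ h => snd_inj hw (congrArg Prod.snd h)
  have hinj2 : ∀ i ∈ (Finset.univ : Finset (Fin n)), ∀ j ∈ Finset.univ,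
      ((w i).2, (w i).1) = ((w j).2, (w j).1) → i = j :=
    fun i _ j _ h => snd_inj hw (congrArg Prod.fst h)
  have hcount : (∑ x : V, ∑ y : V, if (auctionGraph w).Adj x y then c x y else 0) =
      2 * ∑ k : Fin n, c (w k).1 (w k).2 := by
    rw [← Finset.sum_product', ← Finset.univ_product_univ] at *
    rw [show ((Finset.univ : Finset V) ×ˢ (Finset.univ : Finset V)) =
      (Finset.univ : Finset (V × V)) from Finset.univ_product_univ] at *
    rw [← Finset.sum_subset (Finset.subset_univ (P1 ∪ P2)) hzero]
    rw [Finset.sum_union hdisjP, Finset.sum_image hinj1, Finset.sum_image hinj2]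
    have e1 : ∀ k : Fin n,
        (if (auctionGraph w).Adj (w k).1 (w k).2 then c (w k).1 (w k).2 else 0) =
          c (w k).1 (w k).2 := fun k => if_pos (hadj k)
    have e2 : ∀ k : Fin n,
        (if (auctionGraph w).Adj (w k).2 (w k).1 then c (w k).2 (w k).1 else 0) =
          c (w k).1 (w k).2 := fun k => by rw [if_pos (hadj k).symm, hsymm]
    rw [Finset.sum_congr rfl fun k _ => e1 k, Finset.sum_congr rfl fun k _ => e2 k]
    ring
  unfold gWeight
  rw [hcount]
  ring

end Auction

section Main

open SimpleGraph

theorem statement2 {V : Type*} [Fintype V] [DecidableEq V] (R T : Finset V)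
    (hdisj : Disjoint R T) (hunion : R ∪ T = Finset.univ) (hcard : 3 ≤ Fintype.card V)
    (c : V → V → ℝ) (hsymm : ∀ x y, c x y = c y x) (hnonneg : ∀ x y, 0 ≤ c x y)
    (hinj : InjOnEdges c)
    (w : Fin T.card → V × V) (hw : IsAuction R T c w)
    -- `F'` is a spanning tree of the complete graph on `R`
    (F' : SimpleGraph V)
    (hF'R : ∀ x y : V, F'.Adj x y → x ∈ R ∧ y ∈ R)
    (hF'acyc : F'.IsAcyclic)
    (hF'conn : ∀ x ∈ R, ∀ y ∈ R, F'.Reachable x y) :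
    -- `F' ∪ W` is a spanning tree of `G'` (the complete graph, where `G'`-costs of
    -- robot-robot edges are `0` and all other costs agree with `c`) ...
    (F' ⊔ auctionGraph w).IsTree ∧
    -- ... of minimum total `c'`-cost among all spanning trees of `G'` ...
    (∀ K : SimpleGraph V, K.IsTree →
      gWeight (fun x y => if x ∈ R ∧ y ∈ R then 0 else c x y) (F' ⊔ auctionGraph w) ≤
        gWeight (fun x y => if x ∈ R ∧ y ∈ R then 0 else c x y) K) ∧
    -- ... and the total cost of the winning edges is this minimum spanning tree weight
    (∑ k : Fin T.card, c (w k).1 (w k).2 =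
      gWeight (fun x y => if x ∈ R ∧ y ∈ R then 0 else c x y) (F' ⊔ auctionGraph w)) := by
  classical
  set c' : V → V → ℝ := fun x y => if x ∈ R ∧ y ∈ R then 0 else c x y with hc'def
  have hc'symm : ∀ x y, c' x y = c' y x := by
    intro x y
    simp only [hc'def]
    by_cases h : x ∈ R ∧ y ∈ R
    · rw [if_pos h, if_pos ⟨h.2, h.1⟩]
    · rw [if_neg h, if_neg (fun h' => h ⟨h'.2, h'.1⟩), hsymm]
  have hc'nonneg : ∀ x y, 0 ≤ c' x y := by
    intro x y
    simp only [hc'def]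
    split_ifs
    · exact le_refl 0
    · exact hnonneg x y
  have htree : (F' ⊔ auctionGraph w).IsTree :=
    ⟨M_connected hdisj hunion rfl hcard hw F' hF'conn, M_acyclic hdisj hw F' hF'R hF'acyc⟩
  have hWauc : gWeight c' (auctionGraph w) = ∑ k : Fin T.card, c (w k).1 (w k).2 := by
    rw [← gWeight_auction hdisj hw hsymm]
    apply gWeight_congr
    intro a b
    by_cases h : (auctionGraph w).Adj a b
    · rw [if_pos h, if_pos h]
      obtain ⟨hne, k, hk | hk⟩ := auctionGraph_adj.mp h
      · have hb : b ∉ R := by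
          have hb2 : (w k).2 = b := by rw [hk]
          exact hb2 ▸ snd_not_R hdisj hw k
        simp only [hc'def]
        rw [if_neg (fun h' => hb h'.2)]
      · have ha : a ∉ R := by
          have ha2 : (w k).2 = a := by rw [hk]
          exact ha2 ▸ snd_not_R hdisj hw k
        simp only [hc'def]
        rw [if_neg (fun h' => ha h'.1)]
    · rw [if_neg h, if_neg h]
  have hWM : gWeight c' (F' ⊔ auctionGraph w) = ∑ k : Fin T.card, c (w k).1 (w k).2 := by
    rw [← hWauc]
    apply gWeight_congr
    intro a b
    by_cases h : (auctionGraph w).Adj a b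
    · rw [if_pos ((sup_adj _ _ _ _).mpr (Or.inr h)), if_pos h]
    · by_cases hM : (F' ⊔ auctionGraph w).Adj a b
      · rw [if_pos hM, if_neg h]
        rcases (sup_adj _ _ _ _).mp hM with hF | hA
        · obtain ⟨ha, hb⟩ := hF'R _ _ hF
          simp only [hc'def]
          rw [if_pos ⟨ha, hb⟩]
        · exact absurd hA h
      · rw [if_neg hM, if_neg h]
  obtain ⟨K₀, hK₀mem, hK₀min⟩ := Finset.exists_min_image
    (Finset.univ.filter fun K : SimpleGraph V => K.IsTree) (gWeight c')
    ⟨F' ⊔ auctionGraph w, Finset.mem_filter.mpr ⟨Finset.mem_univ _, htree⟩⟩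
  have hK₀tree : K₀.IsTree := (Finset.mem_filter.mp hK₀mem).2
  have hK₀all : ∀ k : Fin T.card, K₀.Adj (w k).1 (w k).2 := by
    intro k
    by_contra hna
    have hne := fst_ne_snd hdisj hw k
    have hvS : (w k).2 ∉ (↑(R ∪ auctionAssigned w (k : ℕ)) : Set V) := by
      intro hmem
      rcases Finset.mem_union.mp (Finset.mem_coe.mp hmem) with h | h
      · exact snd_not_R hdisj hw k h
      · exact snd_not_assigned hw k h
    have huS : (w k).1 ∈ (↑(R ∪ auctionAssigned w (k : ℕ)) : Set V) :=
      Finset.mem_coe.mpr (hw k).1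
    obtain ⟨x, y, hxS, hyS, hKxy, htree'⟩ := tree_exchange hK₀tree hne hna _ huS hvS
    have hxmem : x ∈ R ∪ auctionAssigned w (k : ℕ) := Finset.mem_coe.mp hxS
    have hynR : y ∉ R := fun h => hyS (Finset.mem_coe.mpr (Finset.mem_union_left _ h))
    have hymem : y ∈ T \ auctionAssigned w (k : ℕ) := by
      rw [Finset.mem_sdiff]
      refine ⟨?_, fun h => hyS (Finset.mem_coe.mpr (Finset.mem_union_right _ h))⟩
      have hyu : y ∈ R ∪ T := by rw [hunion]; exact Finset.mem_univ y
      rcases Finset.mem_union.mp hyu with h | h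
      · exact absurd h hynR
      · exact h
    have hneq : (x, y) ≠ w k := by
      intro h
      have hx : x = (w k).1 := by rw [← h]
      have hy : y = (w k).2 := by rw [← h]
      exact hna (hx ▸ hy ▸ hKxy)
    have hclt : c (w k).1 (w k).2 < c x y := (hw k).2.2 x hxmem y hymem hneq
    have hxyne : x ≠ y := hKxy.ne
    have hK''nadjxy : ¬(K₀.deleteEdges {s(x, y)}).Adj x y := by
      simp [deleteEdges_adj]
    have hdiff1 : ∀ a b, ¬(a = x ∧ b = y) → ¬(a = y ∧ b = x) →
        (K₀.Adj a b ↔ (K₀.deleteEdges {s(x, y)}).Adj a b) := by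
      intro a b h1 h2
      rw [deleteEdges_adj]
      constructor
      · refine fun h => ⟨h, ?_⟩
        simp only [Set.mem_singleton_iff]
        intro he
        rcases Sym2.eq_iff.mp he with ⟨ha, hb⟩ | ⟨ha, hb⟩
        · exact h1 ⟨ha, hb⟩
        · exact h2 ⟨ha, hb⟩
      · exact fun h => h.1
    have hw1 : gWeight c' K₀ = gWeight c' (K₀.deleteEdges {s(x, y)}) + c' x y :=
      gWeight_add_edge c' hc'symm hxyne hK''nadjxy hKxy hdiff1
    have hK''nadjuv : ¬(K₀.deleteEdges {s(x, y)}).Adj (w k).1 (w k).2 :=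
      fun h => hna (deleteEdges_adj.mp h).1
    have hadjuv' : (K₀.deleteEdges {s(x, y)} ⊔ edge (w k).1 (w k).2).Adj (w k).1 (w k).2 :=
      (sup_adj _ _ _ _).mpr (Or.inr ((edge_adj _ _ _ _).mpr ⟨Or.inl ⟨rfl, rfl⟩, hne⟩))
    have hdiff2 : ∀ a b, ¬(a = (w k).1 ∧ b = (w k).2) → ¬(a = (w k).2 ∧ b = (w k).1) →
        ((K₀.deleteEdges {s(x, y)} ⊔ edge (w k).1 (w k).2).Adj a b ↔
          (K₀.deleteEdges {s(x, y)}).Adj a b) := by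
      intro a b h1 h2
      rw [sup_adj, edge_adj]
      constructor
      · rintro (h | ⟨h | h, -⟩)
        exacts [h, absurd h h1, absurd h h2]
      · exact Or.inl
    have hw2 : gWeight c' (K₀.deleteEdges {s(x, y)} ⊔ edge (w k).1 (w k).2) =
        gWeight c' (K₀.deleteEdges {s(x, y)}) + c' (w k).1 (w k).2 :=
      gWeight_add_edge c' hc'symm hne hK''nadjuv hadjuv' hdiff2
    have hcu : c' (w k).1 (w k).2 = c (w k).1 (w k).2 := by
      simp only [hc'def]
      rw [if_neg (fun h => snd_not_R hdisj hw k h.2)]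
    have hcx : c' x y = c x y := by
      simp only [hc'def]
      rw [if_neg (fun h => hynR h.2)]
    have hmin := hK₀min _ (Finset.mem_filter.mpr ⟨Finset.mem_univ _, htree'⟩)
    rw [hw2] at hmin
    rw [hw1, hcx] at hmin
    rw [hcu] at hmin
    linarith
  have haucle : auctionGraph w ≤ K₀ := by
    intro a b hab
    obtain ⟨hne, k, hk | hk⟩ := auctionGraph_adj.mp hab
    · have h := hK₀all k
      rwa [hk] at h
    · have h := (hK₀all k).symm
      rwa [hk] at h
  have hK₀ge : (∑ k : Fin T.card, c (w k).1 (w k).2) ≤ gWeight c' K₀ := by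
    rw [← hWauc]
    exact gWeight_mono hc'nonneg haucle
  refine ⟨htree, ?_, hWM.symm⟩
  intro K hK
  have h1 := hK₀min K (Finset.mem_filter.mpr ⟨Finset.mem_univ _, hK⟩)
  rw [hWM]
  linarith

end Main
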